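/- arXiv:1701.01494 — 3 statements merged into one kernel-verified Lean document; each statement's English description precedes it below -/
import Mathlib

section
/- Let $m_0 \in \mathbb{N}$ with $m_0 \geq 1$. The number of pairs $(m,n)$ of integers with $m > m_0$ and $n \geq 0$ satisfying $0 < m_0 - |m - 2m_0| - 2n < m - m_0$ equals $m_0(m_0-1)/2$. -/
/-- The number of pairs `(m,n)` of integers with `m > m₀`, `n ≥ 0` and
`0 < m₀ - |m - 2m₀| - 2n < m - m₀` equals `m₀(m₀-1)/2`. -/
theorem count_bifurcation_points (m0 : ℕ) (hm0 : 1 ≤ m0) :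
    Set.ncard {p : ℤ × ℤ |
        (m0 : ℤ) < p.1 ∧ 0 ≤ p.2 ∧
        0 < (m0 : ℤ) - |p.1 - 2 * (m0 : ℤ)| - 2 * p.2 ∧
        (m0 : ℤ) - |p.1 - 2 * (m0 : ℤ)| - 2 * p.2 < p.1 - (m0 : ℤ)}
      = m0 * (m0 - 1) / 2 := by
  classical
  set g : (Σ _ : ℕ, ℕ) → ℤ × ℤ := fun s =>
    if s.2 % 2 = 0 then (((s.1 : ℤ) - s.2 + 2 * m0, (s.2 : ℤ) / 2) : ℤ × ℤ)
    else (2 * (m0 : ℤ) + 1 - ((s.1 : ℤ) - s.2), ((s.2 : ℤ) + 1) / 2) with hg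
  set F : Finset (Σ _ : ℕ, ℕ) := (Finset.range m0).sigma fun y => Finset.range y with hF
  have key : {p : ℤ × ℤ |
        (m0 : ℤ) < p.1 ∧ 0 ≤ p.2 ∧
        0 < (m0 : ℤ) - |p.1 - 2 * (m0 : ℤ)| - 2 * p.2 ∧
        (m0 : ℤ) - |p.1 - 2 * (m0 : ℤ)| - 2 * p.2 < p.1 - (m0 : ℤ)} = ↑(F.image g) := by
    ext p
    obtain ⟨m, n⟩ := p
    simp only [Set.mem_setOf_eq, Finset.coe_image, Set.mem_image, Finset.mem_coe, hF,
      Finset.mem_sigma, Finset.mem_range]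
    constructor
    · rintro ⟨h1, h2, h3, h4⟩
      by_cases hj : 1 ≤ m - 2 * (m0 : ℤ)
      · have habs : |m - 2 * (m0 : ℤ)| = m - 2 * m0 := abs_of_nonneg (by omega)
        rw [habs] at h3 h4
        set Y : ℕ := (2 * n + (m - 2 * m0)).toNat with hYdef
        set X : ℕ := (2 * n).toNat with hXdef
        have hYc : (Y : ℤ) = 2 * n + (m - 2 * m0) := by omega
        have hXc : (X : ℤ) = 2 * n := by omega
        refine ⟨⟨Y, X⟩, ⟨?_, ?_⟩, ?_⟩
        · show Y < m0; omega
        · show X < Y; omega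
        · have hpar : X % 2 = 0 := by omega
          simp only [hg]
          rw [if_pos hpar]
          simp only [Prod.mk.injEq]
          constructor <;> omega
      · have habs : |m - 2 * (m0 : ℤ)| = -(m - 2 * m0) := abs_of_nonpos (by omega)
        rw [habs] at h3 h4
        have hn1 : 1 ≤ n := by omega
        set Y : ℕ := (2 * n - (m - 2 * m0)).toNat with hYdef
        set X : ℕ := (2 * n - 1).toNat with hXdef
        have hYc : (Y : ℤ) = 2 * n - (m - 2 * m0) := by omega
        have hXc : (X : ℤ) = 2 * n - 1 := by omega
        refine ⟨⟨Y, X⟩, ⟨?_, ?_⟩, ?_⟩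
        · show Y < m0; omega
        · show X < Y; omega
        · have hpar : ¬ (X % 2 = 0) := by omega
          simp only [hg]
          rw [if_neg hpar]
          simp only [Prod.mk.injEq]
          constructor <;> omega
    · rintro ⟨⟨y, x⟩, ⟨hy, hx⟩, hgeq⟩
      have hy' : y < m0 := hy
      have hx' : x < y := hx
      simp only [hg] at hgeq
      by_cases hpar : x % 2 = 0
      · rw [if_pos hpar] at hgeq
        simp only [Prod.mk.injEq] at hgeq
        obtain ⟨hm, hn⟩ := hgeq
        have hmj : m - 2 * (m0 : ℤ) = (y : ℤ) - x := by omega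
        have habs : |m - 2 * (m0 : ℤ)| = (y : ℤ) - x := by
          rw [hmj]; exact abs_of_nonneg (by omega)
        rw [habs]; omega
      · rw [if_neg hpar] at hgeq
        simp only [Prod.mk.injEq] at hgeq
        obtain ⟨hm, hn⟩ := hgeq
        have hmj : m - 2 * (m0 : ℤ) = 1 - ((y : ℤ) - x) := by omega
        have habs : |m - 2 * (m0 : ℤ)| = (y : ℤ) - x - 1 := by
          rw [hmj, abs_of_nonpos (by omega)]; ring
        rw [habs]; omega
  have hinj : Set.InjOn g ↑F := by
    rintro ⟨y1, x1⟩ h1 ⟨y2, x2⟩ h2 heq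
    simp only [hF, Finset.coe_sigma, Set.mem_sigma_iff, Finset.mem_coe, Finset.mem_range] at h1 h2
    have h1' : x1 < y1 := h1.2
    have h2' : x2 < y2 := h2.2
    simp only [hg] at heq
    by_cases p1 : x1 % 2 = 0 <;> by_cases p2 : x2 % 2 = 0
    · rw [if_pos p1, if_pos p2] at heq
      simp only [Prod.mk.injEq] at heq
      obtain ⟨hyy, hxx⟩ : y1 = y2 ∧ x1 = x2 := by omega
      subst hyy; subst hxx; rfl
    · rw [if_pos p1, if_neg p2] at heq
      simp only [Prod.mk.injEq] at heq
      exfalso; omega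
    · rw [if_neg p1, if_pos p2] at heq
      simp only [Prod.mk.injEq] at heq
      exfalso; omega
    · rw [if_neg p1, if_neg p2] at heq
      simp only [Prod.mk.injEq] at heq
      obtain ⟨hyy, hxx⟩ : y1 = y2 ∧ x1 = x2 := by omega
      subst hyy; subst hxx; rfl
  rw [key, Set.ncard_coe_finset, Finset.card_image_of_injOn hinj, hF, Finset.card_sigma]
  simp only [Finset.card_range]
  exact Finset.sum_range_id m0
end

section
/- For every integer $m_0 \geq 1$, $\int_0^\infty e_{m_0,0}(r)^2\, e_{m_0+1,0}(r)\, e_{m_0-1,0}(r)\, r\, dr = \frac{(2m_0)!}{4^{m_0}\, m_0!\, \sqrt{(m_0-1)!\,(m_0+1)!}}$. -/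
open MeasureTheory

/-- The normalized Hermite–Gauss ground state `e_{m,0}(r) = √(2/m!) rᵐ e^{-r²/2}`. -/
noncomputable def hermiteGauss0 (m : ℕ) (r : ℝ) : ℝ :=
  Real.sqrt (2 / (Nat.factorial m : ℝ)) * r ^ m * Real.exp (-r ^ 2 / 2)

/-- `⟨e_{m₀,0}² e_{m₀+1,0}, e_{m₀-1,0}⟩_{L²_r}
      = (2m₀)!/(4^{m₀} m₀! √((m₀-1)!(m₀+1)!))`. -/
theorem hermiteGauss0_offdiagonal_integral (m0 : ℕ) (hm0 : 1 ≤ m0) :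
    ∫ r in Set.Ioi (0 : ℝ),
        (hermiteGauss0 m0 r) ^ 2 * hermiteGauss0 (m0 + 1) r * hermiteGauss0 (m0 - 1) r * r
      = (Nat.factorial (2 * m0) : ℝ) /
          (4 ^ m0 * (Nat.factorial m0 : ℝ) *
            Real.sqrt ((Nat.factorial (m0 - 1) : ℝ) * (Nat.factorial (m0 + 1) : ℝ))) := by
  set A : ℝ := (Nat.factorial (m0 - 1) : ℝ) with hA
  set B : ℝ := (Nat.factorial (m0 + 1) : ℝ) with hB
  set M : ℝ := (Nat.factorial m0 : ℝ) with hM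
  have hApos : 0 < A := by positivity
  have hBpos : 0 < B := by positivity
  have hMpos : 0 < M := by positivity
  set c : ℝ := (2 / M) * (2 / Real.sqrt (A * B)) with hc
  have hSpos : 0 < Real.sqrt (A * B) := Real.sqrt_pos.mpr (by positivity)
  -- constant simplification
  have hconst : Real.sqrt (2 / M) ^ 2 * Real.sqrt (2 / B) * Real.sqrt (2 / A) = c := by
    rw [Real.sq_sqrt (by positivity), mul_assoc, ← Real.sqrt_mul (by positivity),
      show 2 / B * (2 / A) = 2 ^ 2 / (A * B) by field_simp,
      Real.sqrt_div (by positivity), Real.sqrt_sq (by norm_num), hc]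
  -- rewrite the integrand
  have hInt : ∀ r ∈ Set.Ioi (0 : ℝ),
      (hermiteGauss0 m0 r) ^ 2 * hermiteGauss0 (m0 + 1) r * hermiteGauss0 (m0 - 1) r * r
        = c * (r ^ ((4 * m0 + 1 : ℕ) : ℝ) * Real.exp (-2 * r ^ (2 : ℝ))) := by
    intro r hr
    have hr0 : (0 : ℝ) < r := hr
    have hrpow : r ^ ((4 * m0 + 1 : ℕ) : ℝ) = r ^ (4 * m0 + 1 : ℕ) :=
      Real.rpow_natCast r _
    have h2 : r ^ (2 : ℝ) = r ^ (2 : ℕ) := Real.rpow_natCast r 2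
    rw [hrpow, h2]
    unfold hermiteGauss0
    rw [← hconst]
    have hexp : Real.exp (-r ^ 2 / 2) ^ 4 = Real.exp (-2 * r ^ (2 : ℕ)) := by
      rw [← Real.exp_nat_mul]; congr 1; push_cast; ring
    have hnat : m0 - 1 + 1 = m0 := Nat.succ_pred_eq_of_pos hm0
    have hpow : r ^ m0 * r ^ m0 * r ^ (m0 + 1) * r ^ (m0 - 1) * r = r ^ (4 * m0 + 1 : ℕ) := by
      rw [← pow_add, ← pow_add, ← pow_add, ← pow_succ]
      congr 1
      omega
    calc (Real.sqrt (2 / M) * r ^ m0 * Real.exp (-r ^ 2 / 2)) ^ 2 *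
          (Real.sqrt (2 / B) * r ^ (m0 + 1) * Real.exp (-r ^ 2 / 2)) *
          (Real.sqrt (2 / A) * r ^ (m0 - 1) * Real.exp (-r ^ 2 / 2)) * r
        = (Real.sqrt (2 / M) ^ 2 * Real.sqrt (2 / B) * Real.sqrt (2 / A)) *
          ((r ^ m0 * r ^ m0 * r ^ (m0 + 1) * r ^ (m0 - 1) * r) *
            Real.exp (-r ^ 2 / 2) ^ 4) := by ring
      _ = _ := by rw [hpow, hexp]
  rw [setIntegral_congr_fun measurableSet_Ioi hInt, integral_const_mul,
    integral_rpow_mul_exp_neg_mul_rpow (by norm_num)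
      (lt_of_lt_of_le neg_one_lt_zero (Nat.cast_nonneg _)) (by norm_num)]
  have hGamma : Real.Gamma ((((4 * m0 + 1 : ℕ) : ℝ) + 1) / 2)
      = (Nat.factorial (2 * m0) : ℝ) := by
    rw [show (((4 * m0 + 1 : ℕ) : ℝ) + 1) / 2 = ((2 * m0 : ℕ) : ℝ) + 1 by push_cast; ring]
    exact Real.Gamma_nat_eq_factorial (2 * m0)
  rw [hGamma]
  have hrpow2 : (2 : ℝ) ^ (-(((4 * m0 + 1 : ℕ) : ℝ) + 1) / 2)
      = ((2 : ℝ) ^ (2 * m0 + 1 : ℕ))⁻¹ := by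
    rw [show (-(((4 * m0 + 1 : ℕ) : ℝ) + 1) / 2) = -((2 * m0 + 1 : ℕ) : ℝ) by push_cast; ring,
      Real.rpow_neg (by norm_num), Real.rpow_natCast]
  rw [hrpow2, hc]
  have h4 : (4 : ℝ) ^ m0 = (2 : ℝ) ^ (2 * m0 : ℕ) := by
    rw [pow_mul]; norm_num
  rw [h4]
  have h2pow : (0 : ℝ) < (2 : ℝ) ^ (2 * m0 : ℕ) := by positivity
  field_simp
  ring
end

section
/- Let $m_0 \geq 2$ be an integer and let $m$ be an integer with $2m_0 + 1 \leq m \leq 3m_0 - 1$. Let $\ell \geq 2$ and $k \geq 0$ be integers, and set $j = m_0 + (m - m_0)\ell$. Then $\frac{m_0 - |m - 2m_0|}{m - m_0} \neq \frac{m_0 - |j - 2m_0| - 2k}{j - m_0}$. -/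
/-- Non-resonance of the bifurcation curves `Ω_{m,0}` with `2m₀+1 ≤ m ≤ 3m₀-1`
within the fixed-point space of the dihedral group `D_{m-m₀}`: for
`j = m₀ + (m-m₀)ℓ` with `ℓ ≥ 2` and `k ≥ 0`, the leading-order bifurcation
frequencies differ. -/
theorem nonresonance_polygon_curves (m0 m ℓ k j : ℤ)
    (hm0 : 2 ≤ m0) (hml : 2 * m0 + 1 ≤ m) (hmu : m ≤ 3 * m0 - 1)
    (hℓ : 2 ≤ ℓ) (hk : 0 ≤ k) (hj : j = m0 + (m - m0) * ℓ) :
    ((m0 : ℝ) - |(m : ℝ) - 2 * (m0 : ℝ)|) / ((m : ℝ) - (m0 : ℝ)) ≠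
      ((m0 : ℝ) - |(j : ℝ) - 2 * (m0 : ℝ)| - 2 * (k : ℝ)) / ((j : ℝ) - (m0 : ℝ)) := by
  have hd : (0:ℤ) < m - m0 := by linarith
  have h1 : (0:ℤ) ≤ m - 2*m0 := by linarith
  have hj2 : (0:ℤ) ≤ j - 2*m0 := by nlinarith
  have hjd : (0:ℤ) < j - m0 := by nlinarith
  have hjbig : 3*m0 + 2 ≤ j := by nlinarith
  have habs1 : |(m:ℝ) - 2*(m0:ℝ)| = (m:ℝ) - 2*m0 := abs_of_nonneg (by exact_mod_cast h1)
  have habs2 : |(j:ℝ) - 2*(m0:ℝ)| = (j:ℝ) - 2*m0 := abs_of_nonneg (by exact_mod_cast hj2)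
  rw [habs1, habs2]
  have hdR : (0:ℝ) < (m:ℝ) - m0 := by exact_mod_cast hd
  have hjdR : (0:ℝ) < (j:ℝ) - m0 := by exact_mod_cast hjd
  have hmuR : (m:ℝ) ≤ 3*m0 - 1 := by exact_mod_cast hmu
  have hjR : (3*(m0:ℝ) + 2) ≤ (j:ℝ) := by exact_mod_cast hjbig
  have hkR : (0:ℝ) ≤ (k:ℝ) := by exact_mod_cast hk
  have hpos : (0:ℝ) < ((m0:ℝ) - ((m:ℝ) - 2*m0)) / ((m:ℝ) - m0) :=
    div_pos (by linarith) hdR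
  have hneg : ((m0:ℝ) - ((j:ℝ) - 2*m0) - 2*k) / ((j:ℝ) - m0) < 0 :=
    div_neg_of_neg_of_pos (by linarith) hjdR
  intro h
  rw [h] at hpos
  linarith
end
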